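/- In the variable-length model with n = 2 agents and a covering interval of length 1, let μ be any randomized mechanism mapping each instance I to a Borel probability measure μ(I) on ℝ, and suppose μ is truthful in expectation: for every instance I, every agent i, and every misreported interval, the expected cost of agent i (with respect to her true interval) under μ(I) is at most her expected cost under μ(I'), where I' is the misreported instance. Then for every ε ∈ (0, 1), there exist an instance I and a position c ∈ ℝ such that SC_I(c) > 0 and ∫ SC_I(x) dμ(I)(x) ≥ (1/(4ε)) · SC_I(c); that is, every randomized truthful-in-expectation mechanism has approximation ratio Ω(1/ε). -/

import Mathlib

open MeasureTheory

/-- Cost of an agent with interval `[a, b]` when the unit-length covering interval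
is placed at `c`: the uncovered length `(b - a) - |[a, b] ∩ [c, c+1]|`. -/
noncomputable def icost (a b c : ℝ) : ℝ :=
  (b - a) - max 0 (min b (c + 1) - max a c)

/-- Social cost of a two-agent instance `I` (each agent is a pair of endpoints). -/
noncomputable def SC2 (I : Fin 2 → ℝ × ℝ) (c : ℝ) : ℝ :=
  ∑ i, icost (I i).1 (I i).2 c

/-- A randomized mechanism `μ` (mapping instances to Borel probability measures on
covering positions) is truthful in expectation if no agent with a valid true
interval can decrease her expected true cost by reporting any valid interval. -/
def TruthfulInExpectation2 (μ : (Fin 2 → ℝ × ℝ) → Measure ℝ) : Prop :=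
  ∀ (I : Fin 2 → ℝ × ℝ), (∀ i, (I i).1 ≤ (I i).2) →
    ∀ (i : Fin 2) (J : ℝ × ℝ), J.1 ≤ J.2 →
      (∫ x, icost (I i).1 (I i).2 x ∂(μ I)) ≤
        ∫ x, icost (I i).1 (I i).2 x ∂(μ (Function.update I i J))

namespace LBAux

noncomputable def ov (a b c : ℝ) : ℝ := max 0 (min b (c + 1) - max a c)

lemma icost_eq (a b c : ℝ) : icost a b c = (b - a) - ov a b c := rfl

lemma ov_nonneg (a b c : ℝ) : 0 ≤ ov a b c := le_max_left _ _

lemma ov_le_len (a b c : ℝ) (h : a ≤ b) : ov a b c ≤ b - a := by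
  unfold ov
  have h1 : min b (c + 1) ≤ b := min_le_left _ _
  have h2 : a ≤ max a c := le_max_left _ _
  exact max_le (by linarith) (by linarith)

lemma icost_nonneg (a b c : ℝ) (h : a ≤ b) : 0 ≤ icost a b c := by
  have := ov_le_len a b c h; rw [icost_eq]; linarith

lemma ov_zero_right (a b c : ℝ) (h : c + 1 ≤ a) : ov a b c = 0 := by
  unfold ov
  have h1 : min b (c + 1) ≤ c + 1 := min_le_right _ _
  have h2 : a ≤ max a c := le_max_left _ _
  exact max_eq_left (by linarith)

lemma ov_zero_left (a b c : ℝ) (h : b ≤ c) : ov a b c = 0 := by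
  unfold ov
  have h1 : min b (c + 1) ≤ b := min_le_left _ _
  have h2 : c ≤ max a c := le_max_right _ _
  exact max_eq_left (by linarith)

lemma ov_full (a b c : ℝ) (h1 : c ≤ a) (h2 : b ≤ c + 1) (h3 : a ≤ b) : ov a b c = b - a := by
  unfold ov
  rw [min_eq_left h2, max_eq_left h1]
  exact max_eq_right (by linarith)

lemma ov_split (a b d c : ℝ) (hab : a ≤ b) (hbd : b ≤ d) :
    ov a d c = ov a b c + ov b d c := by
  rcases le_total b c with h | h
  · rw [ov_zero_left a b c h, zero_add]
    unfold ov
    rw [max_eq_right h, max_eq_right (hab.trans h)]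
  · rcases le_total b (c + 1) with h3 | h3
    · have e1 : ov a b c = b - max a c := by
        unfold ov
        rw [min_eq_left h3]
        refine max_eq_right ?_
        have := max_le hab h; linarith
      have e2 : ov b d c = min d (c + 1) - b := by
        unfold ov
        rw [max_eq_left h]
        refine max_eq_right ?_
        have := le_min hbd h3; linarith
      have e3 : ov a d c = min d (c + 1) - max a c := by
        unfold ov
        refine max_eq_right ?_
        have h5 : max a c ≤ b := max_le hab h
        have h6 : b ≤ min d (c + 1) := le_min hbd h3
        linarith
      rw [e1, e2, e3]; ring
    · have e1 : ov b d c = 0 := by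
        unfold ov
        rw [max_eq_left h]
        refine max_eq_left ?_
        have : min d (c + 1) ≤ c + 1 := min_le_right _ _
        linarith
      rw [e1, add_zero]
      unfold ov
      rw [min_eq_right h3, min_eq_right (h3.trans hbd)]

lemma ov_sum (t e : ℝ) (he : 0 ≤ e) (c : ℝ) (K : ℕ) :
    ∑ j ∈ Finset.range K, ov (t + j * e) (t + j * e + e) c = ov t (t + K * e) c := by
  induction K with
  | zero =>
      simp only [Finset.range_zero, Finset.sum_empty, Nat.cast_zero, zero_mul, add_zero]
      have h1 := ov_le_len t t c le_rfl
      have h2 := ov_nonneg t t c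
      linarith
  | succ n ih =>
      rw [Finset.sum_range_succ, ih]
      have h1 : t ≤ t + (n : ℝ) * e := by
        have := mul_nonneg (Nat.cast_nonneg (α := ℝ) n) he
        linarith
      have h2 : t + (n : ℝ) * e ≤ t + (n : ℝ) * e + e := by linarith
      have hs := ov_split t (t + (n : ℝ) * e) (t + (n : ℝ) * e + e) c h1 h2
      rw [show t + ((n : ℕ) + 1 : ℕ) * e = t + (n : ℝ) * e + e by push_cast; ring]
      exact hs.symm

lemma ov_continuous (a b : ℝ) : Continuous (fun c => ov a b c) := by
  unfold ov
  exact continuous_const.max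
    ((continuous_const.min (continuous_id.add continuous_const)).sub
      (continuous_const.max continuous_id))

lemma integrable_ov (a b : ℝ) (h : a ≤ b) (ν : Measure ℝ) [IsProbabilityMeasure ν] :
    Integrable (fun c => ov a b c) ν := by
  refine Integrable.mono' (integrable_const (b - a)) (ov_continuous a b).aestronglyMeasurable ?_
  filter_upwards with c
  rw [Real.norm_eq_abs, abs_of_nonneg (ov_nonneg a b c)]
  exact ov_le_len a b c h

lemma integrable_icost (a b : ℝ) (h : a ≤ b) (ν : Measure ℝ) [IsProbabilityMeasure ν] :
    Integrable (fun c => icost a b c) ν := by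
  have he : (fun c => icost a b c) = fun c => (b - a) - ov a b c := by
    funext c; exact icost_eq a b c
  rw [he]
  exact (integrable_const (b - a)).sub (integrable_ov a b h ν)

lemma integral_icost (a b : ℝ) (h : a ≤ b) (ν : Measure ℝ) [IsProbabilityMeasure ν] :
    ∫ c, icost a b c ∂ν = (b - a) - ∫ c, ov a b c ∂ν := by
  have he : (fun c => icost a b c) = fun c => (b - a) - ov a b c := by
    funext c; exact icost_eq a b c
  rw [he, integral_sub (integrable_const _) (integrable_ov a b h ν), integral_const]
  simp

lemma SC2_eval (I : Fin 2 → ℝ × ℝ) (c : ℝ) :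
    SC2 I c = icost (I 0).1 (I 0).2 c + icost (I 1).1 (I 1).2 c := by
  simp [SC2, Fin.sum_univ_two]

lemma integrable_SC2 (I : Fin 2 → ℝ × ℝ) (h : ∀ i, (I i).1 ≤ (I i).2)
    (ν : Measure ℝ) [IsProbabilityMeasure ν] :
    Integrable (fun c => SC2 I c) ν := by
  have he : (fun c => SC2 I c)
      = fun c => icost (I 0).1 (I 0).2 c + icost (I 1).1 (I 1).2 c := by
    funext c; exact SC2_eval I c
  rw [he]
  exact (integrable_icost _ _ (h 0) ν).add (integrable_icost _ _ (h 1) ν)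

noncomputable def instA (ε : ℝ) (i : ℕ) : Fin 2 → ℝ × ℝ :=
  ![((0:ℝ), (1:ℝ)), (2 + i * ε, 2 + i * ε + ε)]

noncomputable def instB (ε : ℝ) (j : ℕ) : Fin 2 → ℝ × ℝ :=
  ![((j : ℝ) * ε, (j : ℝ) * ε + ε), ((2:ℝ), (3:ℝ))]

noncomputable def instD (ε : ℝ) (i j : ℕ) : Fin 2 → ℝ × ℝ :=
  ![((j : ℝ) * ε, (j : ℝ) * ε + ε), (2 + i * ε, 2 + i * ε + ε)]

lemma instA0 (ε : ℝ) (i : ℕ) : instA ε i 0 = ((0:ℝ), (1:ℝ)) := rfl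
lemma instA1 (ε : ℝ) (i : ℕ) : instA ε i 1 = (2 + i * ε, 2 + i * ε + ε) := rfl
lemma instB0 (ε : ℝ) (j : ℕ) : instB ε j 0 = ((j : ℝ) * ε, (j : ℝ) * ε + ε) := rfl
lemma instB1 (ε : ℝ) (j : ℕ) : instB ε j 1 = ((2:ℝ), (3:ℝ)) := rfl
lemma instD0 (ε : ℝ) (i j : ℕ) : instD ε i j 0 = ((j : ℝ) * ε, (j : ℝ) * ε + ε) := rfl
lemma instD1 (ε : ℝ) (i j : ℕ) : instD ε i j 1 = (2 + i * ε, 2 + i * ε + ε) := rfl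

lemma updD0 (ε : ℝ) (i j : ℕ) :
    Function.update (instD ε i j) 0 ((0:ℝ), (1:ℝ)) = instA ε i := by
  funext k
  fin_cases k
  · show Function.update (instD ε i j) 0 ((0:ℝ), (1:ℝ)) 0 = instA ε i 0
    rw [Function.update_self]; rfl
  · show Function.update (instD ε i j) 0 ((0:ℝ), (1:ℝ)) 1 = instA ε i 1
    rw [Function.update_of_ne (by decide : (1 : Fin 2) ≠ 0)]; rfl

lemma updD1 (ε : ℝ) (i j : ℕ) :
    Function.update (instD ε i j) 1 ((2:ℝ), (3:ℝ)) = instB ε j := by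
  funext k
  fin_cases k
  · show Function.update (instD ε i j) 1 ((2:ℝ), (3:ℝ)) 0 = instB ε j 0
    rw [Function.update_of_ne (by decide : (0 : Fin 2) ≠ 1)]; rfl
  · show Function.update (instD ε i j) 1 ((2:ℝ), (3:ℝ)) 1 = instB ε j 1
    rw [Function.update_self]; rfl

lemma validA (ε : ℝ) (hε : 0 ≤ ε) (i : ℕ) (k : Fin 2) :
    (instA ε i k).1 ≤ (instA ε i k).2 := by
  have hi : (0:ℝ) ≤ (i:ℝ) * ε := mul_nonneg (Nat.cast_nonneg i) hε
  fin_cases k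
  · show (0:ℝ) ≤ 1; norm_num
  · show 2 + (i:ℝ) * ε ≤ 2 + i * ε + ε; linarith

lemma validB (ε : ℝ) (hε : 0 ≤ ε) (j : ℕ) (k : Fin 2) :
    (instB ε j k).1 ≤ (instB ε j k).2 := by
  fin_cases k
  · show (j:ℝ) * ε ≤ (j:ℝ) * ε + ε; linarith
  · show (2:ℝ) ≤ 3; norm_num

lemma validD (ε : ℝ) (hε : 0 ≤ ε) (i j : ℕ) (k : Fin 2) :
    (instD ε i j k).1 ≤ (instD ε i j k).2 := by
  fin_cases k
  · show (j:ℝ) * ε ≤ (j:ℝ) * ε + ε; linarith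
  · show 2 + (i:ℝ) * ε ≤ 2 + i * ε + ε; linarith

end LBAux

open LBAux

/-- When interval lengths are unknown, every randomized truthful-in-expectation
mechanism for two agents with a unit covering interval has approximation ratio at
least `1/(4ε)` for every `ε ∈ (0, 1)`, hence ratio `Ω(1/ε)`. -/
theorem unknown_lengths_randomized_lower_bound
    (μ : (Fin 2 → ℝ × ℝ) → Measure ℝ)
    (hprob : ∀ I, IsProbabilityMeasure (μ I))
    (htruth : TruthfulInExpectation2 μ)
    (ε : ℝ) (hε0 : 0 < ε) (hε1 : ε < 1) :
    ∃ I : Fin 2 → ℝ × ℝ, (∀ i, (I i).1 ≤ (I i).2) ∧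
      ∃ c : ℝ, 0 < SC2 I c ∧
        (1 / (4 * ε)) * SC2 I c ≤ ∫ x, SC2 I x ∂(μ I) := by
  classical
  rcases le_or_gt (1/4 : ℝ) ε with hc | hc
  · -- easy case: ε ≥ 1/4
    set I₀ : Fin 2 → ℝ × ℝ := ![((0:ℝ), (1:ℝ)), ((2:ℝ), (3:ℝ))] with hI₀
    haveI := hprob I₀
    have hval : ∀ i, (I₀ i).1 ≤ (I₀ i).2 := by
      intro i; fin_cases i
      · show (0:ℝ) ≤ 1; norm_num
      · show (2:ℝ) ≤ 3; norm_num
    have hSC : SC2 I₀ 0 = 1 := by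
      rw [SC2_eval]
      show icost 0 1 0 + icost 2 3 0 = 1
      rw [icost_eq, icost_eq, ov_full 0 1 0 le_rfl (by norm_num) (by norm_num),
        ov_zero_right 2 3 0 (by norm_num)]
      ring
    have hpt : ∀ x, (1:ℝ) ≤ SC2 I₀ x := by
      intro x
      rw [SC2_eval]
      show (1:ℝ) ≤ icost 0 1 x + icost 2 3 x
      rcases le_total x 1 with h | h
      · have h1 : ov 2 3 x = 0 := ov_zero_right 2 3 x (by linarith)
        have h2 := ov_le_len 0 1 x (by norm_num)
        rw [icost_eq, icost_eq, h1]; linarith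
      · have h1 : ov 0 1 x = 0 := ov_zero_left 0 1 x (by linarith)
        have h2 := ov_le_len 2 3 x (by norm_num)
        rw [icost_eq, icost_eq, h1]; linarith
    have hge : (1:ℝ) ≤ ∫ x, SC2 I₀ x ∂(μ I₀) := by
      calc (1:ℝ) = ∫ _x, (1:ℝ) ∂(μ I₀) := by simp
      _ ≤ ∫ x, SC2 I₀ x ∂(μ I₀) :=
          integral_mono (integrable_const 1) (integrable_SC2 I₀ hval (μ I₀)) hpt
    refine ⟨I₀, hval, 0, by rw [hSC]; norm_num, ?_⟩
    rw [hSC, mul_one]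
    have : 1 / (4 * ε) ≤ 1 := by
      rw [div_le_one (by linarith)]; linarith
    linarith
  · -- main case: ε < 1/4
    by_contra hcon
    push_neg at hcon
    have hεle : (0:ℝ) ≤ ε := hε0.le
    obtain ⟨K, hK1, hK2, hK3⟩ : ∃ K : ℕ, (K:ℝ) * ε ≤ 1 ∧ 1 < ((K:ℝ) + 1) * ε ∧ 1 ≤ K := by
      refine ⟨Nat.floor (1/ε), ?_, ?_, ?_⟩
      · have h := Nat.floor_le (show (0:ℝ) ≤ 1/ε by positivity)
        have h3 : (1/ε) * ε = 1 := by field_simp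
        calc ((Nat.floor (1/ε) : ℝ)) * ε ≤ (1/ε) * ε :=
              mul_le_mul_of_nonneg_right h hεle
        _ = 1 := h3
      · have h := Nat.lt_floor_add_one (1/ε)
        have h2 := mul_lt_mul_of_pos_right h hε0
        have h3 : (1/ε) * ε = 1 := by field_simp
        linarith
      · refine Nat.le_floor ?_
        rw [Nat.cast_one, le_div_iff₀ hε0, one_mul]
        linarith
    -- coverage of the unit agent [0,1] in instances A i is large
    have hA : ∀ i : ℕ, (3:ℝ)/4 < ∫ x, ov 0 1 x ∂(μ (instA ε i)) := by
      intro i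
      haveI := hprob (instA ε i)
      have hval := validA ε hεle i
      have hi0 : (0:ℝ) ≤ (i:ℝ) * ε := mul_nonneg (Nat.cast_nonneg i) hεle
      have hSC0 : SC2 (instA ε i) 0 = ε := by
        rw [SC2_eval]
        show icost 0 1 0 + icost (2 + i*ε) (2 + i*ε + ε) 0 = ε
        rw [icost_eq, icost_eq, ov_full 0 1 0 le_rfl (by norm_num) (by norm_num),
          ov_zero_right (2 + i*ε) (2 + i*ε + ε) 0 (by linarith)]
        ring
      have h4 := hcon (instA ε i) hval 0 (by rw [hSC0]; exact hε0)
      rw [hSC0] at h4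
      have h5 : 1/(4*ε) * ε = 1/4 := by field_simp
      rw [h5] at h4
      have h6 : (∫ x, icost 0 1 x ∂(μ (instA ε i)))
          ≤ ∫ x, SC2 (instA ε i) x ∂(μ (instA ε i)) := by
        refine integral_mono (integrable_icost 0 1 (by norm_num) _)
          (integrable_SC2 _ hval _) ?_
        intro x
        rw [SC2_eval]
        show icost 0 1 x ≤ icost 0 1 x + icost (2 + i*ε) (2 + i*ε + ε) x
        have h7 := icost_nonneg (2 + i*ε) (2 + i*ε + ε) x (by linarith)
        linarith
      rw [integral_icost 0 1 (by norm_num) _] at h6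
      linarith
    -- coverage of the unit agent [2,3] in instances B j is large
    have hB : ∀ j : ℕ, (j:ℝ) * ε + ε ≤ 1 → (3:ℝ)/4 < ∫ x, ov 2 3 x ∂(μ (instB ε j)) := by
      intro j hj
      haveI := hprob (instB ε j)
      have hval := validB ε hεle j
      have hj0 : (0:ℝ) ≤ (j:ℝ) * ε := mul_nonneg (Nat.cast_nonneg j) hεle
      have hSC0 : SC2 (instB ε j) 2 = ε := by
        rw [SC2_eval]
        show icost ((j:ℝ)*ε) ((j:ℝ)*ε + ε) 2 + icost 2 3 2 = ε
        rw [icost_eq, icost_eq, ov_full 2 3 2 le_rfl (by norm_num) (by norm_num),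
          ov_zero_left ((j:ℝ)*ε) ((j:ℝ)*ε + ε) 2 (by linarith)]
        ring
      have h4 := hcon (instB ε j) hval 2 (by rw [hSC0]; exact hε0)
      rw [hSC0] at h4
      have h5 : 1/(4*ε) * ε = 1/4 := by field_simp
      rw [h5] at h4
      have h6 : (∫ x, icost 2 3 x ∂(μ (instB ε j)))
          ≤ ∫ x, SC2 (instB ε j) x ∂(μ (instB ε j)) := by
        refine integral_mono (integrable_icost 2 3 (by norm_num) _)
          (integrable_SC2 _ hval _) ?_
        intro x
        rw [SC2_eval]
        show icost 2 3 x ≤ icost ((j:ℝ)*ε) ((j:ℝ)*ε + ε) x + icost 2 3 x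
        have h7 := icost_nonneg ((j:ℝ)*ε) ((j:ℝ)*ε + ε) x (by linarith)
        linarith
      rw [integral_icost 2 3 (by norm_num) _] at h6
      linarith
    -- key truthfulness consequence: per-pair coverage bound
    have hKey : ∀ i j : ℕ, (j:ℝ) * ε + ε ≤ 1 →
        (∫ x, ov ((j:ℝ)*ε) ((j:ℝ)*ε + ε) x ∂(μ (instA ε i)))
          + (∫ x, ov (2 + (i:ℝ)*ε) (2 + (i:ℝ)*ε + ε) x ∂(μ (instB ε j))) ≤ ε := by
      intro i j hj
      haveI := hprob (instD ε i j)
      haveI := hprob (instA ε i)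
      haveI := hprob (instB ε j)
      have hvalD := validD ε hεle i j
      have hi0 : (0:ℝ) ≤ (i:ℝ) * ε := mul_nonneg (Nat.cast_nonneg i) hεle
      have hj0 : (0:ℝ) ≤ (j:ℝ) * ε := mul_nonneg (Nat.cast_nonneg j) hεle
      have t0 : (∫ x, icost ((j:ℝ)*ε) ((j:ℝ)*ε + ε) x ∂(μ (instD ε i j)))
          ≤ ∫ x, icost ((j:ℝ)*ε) ((j:ℝ)*ε + ε) x ∂(μ (instA ε i)) := by
        have h := htruth (instD ε i j) hvalD 0 ((0:ℝ),(1:ℝ)) (by norm_num)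
        rw [updD0] at h
        exact h
      have t1 : (∫ x, icost (2 + (i:ℝ)*ε) (2 + (i:ℝ)*ε + ε) x ∂(μ (instD ε i j)))
          ≤ ∫ x, icost (2 + (i:ℝ)*ε) (2 + (i:ℝ)*ε + ε) x ∂(μ (instB ε j)) := by
        have h := htruth (instD ε i j) hvalD 1 ((2:ℝ),(3:ℝ)) (by norm_num)
        rw [updD1] at h
        exact h
      have hpt : ∀ x, ε ≤ icost ((j:ℝ)*ε) ((j:ℝ)*ε + ε) x
          + icost (2 + (i:ℝ)*ε) (2 + (i:ℝ)*ε + ε) x := by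
        intro x
        rcases le_total x 1 with h | h
        · have h1 : ov (2 + (i:ℝ)*ε) (2 + (i:ℝ)*ε + ε) x = 0 :=
            ov_zero_right _ _ _ (by linarith)
          have h2 := ov_le_len ((j:ℝ)*ε) ((j:ℝ)*ε + ε) x (by linarith)
          rw [icost_eq, icost_eq, h1]
          linarith
        · have h1 : ov ((j:ℝ)*ε) ((j:ℝ)*ε + ε) x = 0 :=
            ov_zero_left _ _ _ (by linarith)
          have h2 := ov_le_len (2 + (i:ℝ)*ε) (2 + (i:ℝ)*ε + ε) x (by linarith)
          rw [icost_eq, icost_eq, h1]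
          linarith
      have hintg1 := integrable_icost ((j:ℝ)*ε) ((j:ℝ)*ε + ε) (by linarith) (μ (instD ε i j))
      have hintg2 := integrable_icost (2 + (i:ℝ)*ε) (2 + (i:ℝ)*ε + ε) (by linarith)
        (μ (instD ε i j))
      have hmid : ε ≤ (∫ x, icost ((j:ℝ)*ε) ((j:ℝ)*ε + ε) x ∂(μ (instD ε i j)))
          + ∫ x, icost (2 + (i:ℝ)*ε) (2 + (i:ℝ)*ε + ε) x ∂(μ (instD ε i j)) := by
        calc ε = ∫ _x, ε ∂(μ (instD ε i j)) := by simp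
        _ ≤ ∫ x, (icost ((j:ℝ)*ε) ((j:ℝ)*ε + ε) x
              + icost (2 + (i:ℝ)*ε) (2 + (i:ℝ)*ε + ε) x) ∂(μ (instD ε i j)) :=
            integral_mono (integrable_const ε) (hintg1.add hintg2) hpt
        _ = _ := integral_add hintg1 hintg2
      have e1 : (∫ x, icost ((j:ℝ)*ε) ((j:ℝ)*ε + ε) x ∂(μ (instA ε i)))
          = ε - ∫ x, ov ((j:ℝ)*ε) ((j:ℝ)*ε + ε) x ∂(μ (instA ε i)) := by
        rw [integral_icost _ _ (by linarith) _,
          show ((j:ℝ)*ε + ε) - (j:ℝ)*ε = ε by ring]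
      have e2 : (∫ x, icost (2 + (i:ℝ)*ε) (2 + (i:ℝ)*ε + ε) x ∂(μ (instB ε j)))
          = ε - ∫ x, ov (2 + (i:ℝ)*ε) (2 + (i:ℝ)*ε + ε) x ∂(μ (instB ε j)) := by
        rw [integral_icost _ _ (by linarith) _,
          show (2 + (i:ℝ)*ε + ε) - (2 + (i:ℝ)*ε) = ε by ring]
      rw [e1] at t0
      rw [e2] at t1
      linarith
    -- row sums
    have hRow : ∀ i : ℕ, (3:ℝ)/4 - ε <
        ∑ j ∈ Finset.range K, ∫ x, ov ((j:ℝ)*ε) ((j:ℝ)*ε + ε) x ∂(μ (instA ε i)) := by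
      intro i
      haveI := hprob (instA ε i)
      have hKε0 : (0:ℝ) ≤ (K:ℝ) * ε := mul_nonneg (Nat.cast_nonneg K) hεle
      have hsum : (∑ j ∈ Finset.range K,
            ∫ x, ov ((j:ℝ)*ε) ((j:ℝ)*ε + ε) x ∂(μ (instA ε i)))
          = ∫ x, ov 0 ((K:ℝ)*ε) x ∂(μ (instA ε i)) := by
        rw [← integral_finset_sum]
        · congr 1
          funext x
          have h := ov_sum 0 ε hεle x K
          simpa using h
        · intro j _
          exact integrable_ov _ _ (by linarith) _
      have hpt2 : ∀ x, ov 0 1 x ≤ ov 0 ((K:ℝ)*ε) x + (1 - (K:ℝ)*ε) := by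
        intro x
        have hs := ov_split 0 ((K:ℝ)*ε) 1 x hKε0 hK1
        have hl := ov_le_len ((K:ℝ)*ε) 1 x hK1
        linarith
      have hmono : (∫ x, ov 0 1 x ∂(μ (instA ε i)))
          ≤ (∫ x, ov 0 ((K:ℝ)*ε) x ∂(μ (instA ε i))) + (1 - (K:ℝ)*ε) := by
        have hg : Integrable (fun x => ov 0 ((K:ℝ)*ε) x + (1 - (K:ℝ)*ε)) (μ (instA ε i)) :=
          (integrable_ov 0 ((K:ℝ)*ε) hKε0 (μ (instA ε i))).add
            (integrable_const (1 - (K:ℝ)*ε))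
        have h := integral_mono (integrable_ov 0 1 (by norm_num) (μ (instA ε i))) hg hpt2
        rwa [integral_add (integrable_ov 0 ((K:ℝ)*ε) hKε0 (μ (instA ε i)))
            (integrable_const (1 - (K:ℝ)*ε)),
          integral_const, probReal_univ, one_smul] at h
      have hA_i := hA i
      rw [hsum]
      linarith
    -- column sums
    have hCol : ∀ j : ℕ, j < K → (3:ℝ)/4 - ε <
        ∑ i ∈ Finset.range K, ∫ x, ov (2 + (i:ℝ)*ε) (2 + (i:ℝ)*ε + ε) x ∂(μ (instB ε j)) := by
      intro j hjK
      haveI := hprob (instB ε j)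
      have hKε0 : (0:ℝ) ≤ (K:ℝ) * ε := mul_nonneg (Nat.cast_nonneg K) hεle
      have hj1 : (j:ℝ) * ε + ε ≤ 1 := by
        have h1 : (j:ℕ) + 1 ≤ K := hjK
        have h2 : ((j:ℝ) + 1) ≤ (K:ℝ) := by exact_mod_cast h1
        nlinarith
      have hsum : (∑ i ∈ Finset.range K,
            ∫ x, ov (2 + (i:ℝ)*ε) (2 + (i:ℝ)*ε + ε) x ∂(μ (instB ε j)))
          = ∫ x, ov 2 (2 + (K:ℝ)*ε) x ∂(μ (instB ε j)) := by
        rw [← integral_finset_sum]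
        · congr 1
          funext x
          exact ov_sum 2 ε hεle x K
        · intro i _
          exact integrable_ov _ _ (by linarith) _
      have hpt2 : ∀ x, ov 2 3 x ≤ ov 2 (2 + (K:ℝ)*ε) x + (1 - (K:ℝ)*ε) := by
        intro x
        have hs := ov_split 2 (2 + (K:ℝ)*ε) 3 x (by linarith) (by linarith)
        have hl := ov_le_len (2 + (K:ℝ)*ε) 3 x (by linarith)
        linarith
      have hmono : (∫ x, ov 2 3 x ∂(μ (instB ε j)))
          ≤ (∫ x, ov 2 (2 + (K:ℝ)*ε) x ∂(μ (instB ε j))) + (1 - (K:ℝ)*ε) := by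
        have hg : Integrable (fun x => ov 2 (2 + (K:ℝ)*ε) x + (1 - (K:ℝ)*ε)) (μ (instB ε j)) :=
          (integrable_ov 2 (2 + (K:ℝ)*ε) (by linarith) (μ (instB ε j))).add
            (integrable_const (1 - (K:ℝ)*ε))
        have h := integral_mono (integrable_ov 2 3 (by norm_num) (μ (instB ε j))) hg hpt2
        rwa [integral_add (integrable_ov 2 (2 + (K:ℝ)*ε) (by linarith) (μ (instB ε j)))
            (integrable_const (1 - (K:ℝ)*ε)),
          integral_const, probReal_univ, one_smul] at h
      have hB_j := hB j hj1
      rw [hsum]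
      linarith
    -- total sum contradiction
    have hKne : K ≠ 0 := by omega
    have hne : (Finset.range K).Nonempty := Finset.nonempty_range_iff.mpr hKne
    have hKpos : (0:ℝ) < (K:ℝ) := by
      have : (1:ℝ) ≤ (K:ℝ) := by exact_mod_cast hK3
      linarith
    have hjK : ∀ j ∈ Finset.range K, (j:ℝ) * ε + ε ≤ 1 := by
      intro j hj
      have h1 : (j:ℕ) + 1 ≤ K := Finset.mem_range.mp hj
      have h2 : ((j:ℝ) + 1) ≤ (K:ℝ) := by exact_mod_cast h1
      nlinarith
    have hS1 : (∑ i ∈ Finset.range K, ∑ j ∈ Finset.range K,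
        ((∫ x, ov ((j:ℝ)*ε) ((j:ℝ)*ε + ε) x ∂(μ (instA ε i)))
          + (∫ x, ov (2 + (i:ℝ)*ε) (2 + (i:ℝ)*ε + ε) x ∂(μ (instB ε j)))))
        ≤ (K:ℝ) * ((K:ℝ) * ε) := by
      calc (∑ i ∈ Finset.range K, ∑ j ∈ Finset.range K,
          ((∫ x, ov ((j:ℝ)*ε) ((j:ℝ)*ε + ε) x ∂(μ (instA ε i)))
            + (∫ x, ov (2 + (i:ℝ)*ε) (2 + (i:ℝ)*ε + ε) x ∂(μ (instB ε j)))))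
          ≤ ∑ _i ∈ Finset.range K, ∑ _j ∈ Finset.range K, ε :=
            Finset.sum_le_sum (fun i _ => Finset.sum_le_sum (fun j hj => hKey i j (hjK j hj)))
      _ = (K:ℝ) * ((K:ℝ) * ε) := by
          simp [Finset.sum_const, Finset.card_range, nsmul_eq_mul]
    have hsplit : (∑ i ∈ Finset.range K, ∑ j ∈ Finset.range K,
        ((∫ x, ov ((j:ℝ)*ε) ((j:ℝ)*ε + ε) x ∂(μ (instA ε i)))
          + (∫ x, ov (2 + (i:ℝ)*ε) (2 + (i:ℝ)*ε + ε) x ∂(μ (instB ε j)))))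
        = (∑ i ∈ Finset.range K, ∑ j ∈ Finset.range K,
            ∫ x, ov ((j:ℝ)*ε) ((j:ℝ)*ε + ε) x ∂(μ (instA ε i)))
          + (∑ i ∈ Finset.range K, ∑ j ∈ Finset.range K,
            ∫ x, ov (2 + (i:ℝ)*ε) (2 + (i:ℝ)*ε + ε) x ∂(μ (instB ε j))) := by
      rw [← Finset.sum_add_distrib]
      refine Finset.sum_congr rfl ?_
      intro i _
      rw [← Finset.sum_add_distrib]
    have hW : (K:ℝ) * (3/4 - ε) < ∑ i ∈ Finset.range K, ∑ j ∈ Finset.range K,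
        ∫ x, ov ((j:ℝ)*ε) ((j:ℝ)*ε + ε) x ∂(μ (instA ε i)) := by
      have h := Finset.sum_lt_sum_of_nonempty hne (fun i _ => hRow i)
      simpa [Finset.sum_const, Finset.card_range, nsmul_eq_mul, mul_sub] using h
    have hV : (K:ℝ) * (3/4 - ε) < ∑ i ∈ Finset.range K, ∑ j ∈ Finset.range K,
        ∫ x, ov (2 + (i:ℝ)*ε) (2 + (i:ℝ)*ε + ε) x ∂(μ (instB ε j)) := by
      rw [Finset.sum_comm]
      have h := Finset.sum_lt_sum_of_nonempty hne
        (fun j hj => hCol j (Finset.mem_range.mp hj))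
      simpa [Finset.sum_const, Finset.card_range, nsmul_eq_mul, mul_sub] using h
    have hKK : (K:ℝ) * ((K:ℝ) * ε) ≤ (K:ℝ) := by
      have h := mul_le_mul_of_nonneg_left hK1 hKpos.le
      simpa using h
    nlinarith [hS1, hsplit, hW, hV, hKK, hKpos, hc]
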